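/- arXiv:2102.02742 — 3 statements merged into one kernel-verified Lean document; each statement's English description precedes it below -/
import Mathlib

section
/- Let w : (0,1) → ℝ be a nonnegative increasing function with w(0)=0. Suppose there is a constant C₁ such that ∫₀ᵘ w(ξ)/ξ dξ ≤ C₁·w(u) for all 0 < u < 1 (Dini condition of order 1), and a constant C₂ such that for some positive integer n, ∫ᵤ¹ w(ξ)/ξ^(n+1) dξ ≤ C₂·w(u)/uⁿ for all 0 < u < 1 (condition B_n). Then w satisfies a doubling-type condition: there exists a constant C such that ∫₀^(2u) w(ξ)/ξ dξ ≤ C·w(u) for all u with 0 < 2u ≤ 1. -/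
open MeasureTheory

set_option maxHeartbeats 1000000

theorem stmt_0 (w : ℝ → ℝ) (n : ℕ) (hn : 0 < n) (C₁ C₂ : ℝ)
    (hpos : ∀ u ∈ Set.Ioo (0:ℝ) 1, 0 ≤ w u)
    (hmono : MonotoneOn w (Set.Icc (0:ℝ) 1))
    (hzero : w 0 = 0)
    (hDini : ∀ u : ℝ, 0 < u → u < 1 → ∫ ξ in Set.Ioo (0:ℝ) u, w ξ / ξ ≤ C₁ * w u)
    (hBn : ∀ u : ℝ, 0 < u → u < 1 →
      ∫ ξ in Set.Ioo u (1:ℝ), w ξ / ξ ^ (n + 1) ≤ C₂ * w u / u ^ n) :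
    ∃ C : ℝ, ∀ u : ℝ, 0 < u → 2 * u ≤ 1 →
      ∫ ξ in Set.Ioo (0:ℝ) (2 * u), w ξ / ξ ≤ C * w u := by
  refine ⟨max (C₁ + 2 ^ n * C₂) 0, fun u hu hu2 => ?_⟩
  have hu1 : u < 1 := by linarith
  have h2u : 0 < 2 * u := by linarith
  have hwu : 0 ≤ w u := hpos u ⟨hu, hu1⟩
  have hCw : 0 ≤ max (C₁ + 2 ^ n * C₂) 0 * w u := mul_nonneg (le_max_right _ _) hwu
  by_cases hint : IntegrableOn (fun ξ => w ξ / ξ) (Set.Ioo (0:ℝ) (2 * u)) volume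
  swap
  · rw [integral_undef hint]; exact hCw
  -- integrable pieces
  have hfu : IntegrableOn (fun ξ => w ξ / ξ) (Set.Ioo (0:ℝ) u) volume :=
    hint.mono_set (Set.Ioo_subset_Ioo le_rfl (by linarith))
  have hfm : IntegrableOn (fun ξ => w ξ / ξ) (Set.Ioo u (2 * u)) volume :=
    hint.mono_set (Set.Ioo_subset_Ioo (le_of_lt hu) le_rfl)
  -- g = w ξ / ξ^(n+1)
  set g : ℝ → ℝ := fun ξ => w ξ / ξ ^ (n + 1) with hg_def
  have hgf : ∀ ξ : ℝ, g ξ = (w ξ / ξ) * (ξ ^ n)⁻¹ := by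
    intro ξ
    show w ξ / ξ ^ (n + 1) = (w ξ / ξ) * (ξ ^ n)⁻¹
    rw [← div_eq_mul_inv, div_div, ← pow_succ']
  -- g is integrable on Ioo u (2u)
  have hgm : IntegrableOn g (Set.Ioo u (2 * u)) volume := by
    have hmeas : AEStronglyMeasurable g (volume.restrict (Set.Ioo u (2 * u))) := by
      have : g = fun ξ => (w ξ / ξ) * (ξ ^ n)⁻¹ := funext hgf
      rw [this]
      exact hfm.aestronglyMeasurable.mul
        ((measurable_id.pow_const n).inv.aestronglyMeasurable)
    refine Integrable.mono' (hfm.norm.const_mul ((u ^ n)⁻¹)) hmeas ?_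
    refine (ae_restrict_iff' measurableSet_Ioo).2 (Filter.Eventually.of_forall ?_)
    intro ξ hξ
    have hξ0 : 0 < ξ := lt_trans hu hξ.1
    have hun : (0:ℝ) < u ^ n := pow_pos hu n
    have hξn : u ^ n ≤ ξ ^ n := pow_le_pow_left₀ (le_of_lt hu) (le_of_lt hξ.1) n
    rw [hgf ξ, norm_mul, norm_inv]
    have h1 : ‖ξ ^ n‖ = ξ ^ n := by
      rw [Real.norm_eq_abs, abs_of_pos (pow_pos hξ0 n)]
    rw [h1]
    have : ((ξ : ℝ) ^ n)⁻¹ ≤ (u ^ n)⁻¹ := by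
      apply inv_anti₀ hun hξn
    calc ‖w ξ / ξ‖ * (ξ ^ n)⁻¹ ≤ ‖w ξ / ξ‖ * (u ^ n)⁻¹ :=
          mul_le_mul_of_nonneg_left this (norm_nonneg _)
      _ = (u ^ n)⁻¹ * ‖w ξ / ξ‖ := mul_comm _ _
  -- g is integrable on Icc (2u) 1
  have hwI : IntegrableOn w (Set.Icc (0:ℝ) 1) volume :=
    hmono.integrableOn_isCompact isCompact_Icc
  have hgI : IntegrableOn g (Set.Icc (2 * u) 1) volume := by
    have hsub : Set.Icc (2 * u) 1 ⊆ Set.Icc (0:ℝ) 1 :=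
      Set.Icc_subset_Icc (by linarith) le_rfl
    have hwI' : AEStronglyMeasurable w (volume.restrict (Set.Icc (2 * u) 1)) :=
      hwI.aestronglyMeasurable.mono_measure (Measure.restrict_mono hsub le_rfl)
    have hmeas : AEStronglyMeasurable g (volume.restrict (Set.Icc (2 * u) 1)) := by
      have h2 : Measurable (fun ξ : ℝ => (ξ ^ (n + 1))⁻¹) :=
        (measurable_id.pow_const (n + 1)).inv
      have h3 := hwI'.mul h2.aestronglyMeasurable
      simp only [hg_def, div_eq_mul_inv]
      exact h3
    have hconst : IntegrableOn (fun _ : ℝ => w 1 / (2 * u) ^ (n + 1))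
        (Set.Icc (2 * u) 1) volume := integrableOn_const measure_Icc_lt_top.ne
    refine Integrable.mono' hconst hmeas ?_
    refine (ae_restrict_iff' measurableSet_Icc).2 (Filter.Eventually.of_forall ?_)
    intro ξ hξ
    have hξ0 : 0 < ξ := lt_of_lt_of_le h2u hξ.1
    have hw0 : 0 ≤ w ξ := by
      rcases eq_or_lt_of_le hξ.2 with h | h
      · subst h
        have := hmono (Set.mem_Icc.2 ⟨le_of_lt hu, le_of_lt hu1⟩)
          (Set.mem_Icc.2 ⟨zero_le_one, le_rfl⟩) (le_of_lt hu1)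
        exact le_trans hwu this
      · exact hpos ξ ⟨hξ0, h⟩
    have hw1 : w ξ ≤ w 1 := hmono (Set.mem_Icc.2 ⟨le_of_lt hξ0, hξ.2⟩)
      (Set.mem_Icc.2 ⟨zero_le_one, le_rfl⟩) hξ.2
    have hpow : (2 * u) ^ (n + 1) ≤ ξ ^ (n + 1) :=
      pow_le_pow_left₀ (le_of_lt h2u) hξ.1 (n + 1)
    have hpow0 : (0:ℝ) < (2 * u) ^ (n + 1) := pow_pos h2u _
    rw [Real.norm_eq_abs, abs_of_nonneg (div_nonneg hw0 (le_of_lt (pow_pos hξ0 _)))]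
    exact div_le_div₀ (le_trans hw0 hw1) hw1 hpow0 hpow
  -- g is integrable on Ioo u 1
  have hg1 : IntegrableOn g (Set.Ioo u (1:ℝ)) volume := by
    refine (hgm.union hgI).mono_set ?_
    intro ξ hξ
    rcases lt_or_ge ξ (2 * u) with h | h
    · exact Or.inl ⟨hξ.1, h⟩
    · exact Or.inr ⟨h, le_of_lt hξ.2⟩
  -- nonnegativity of g a.e. on Ioo u 1
  have hgpos : ∀ ξ ∈ Set.Ioo u (1:ℝ), 0 ≤ g ξ := fun ξ hξ =>
    div_nonneg (hpos ξ ⟨lt_trans hu hξ.1, hξ.2⟩) (le_of_lt (pow_pos (lt_trans hu hξ.1) _))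
  -- middle integral bound
  have hmid : ∫ ξ in Set.Ioo u (2 * u), w ξ / ξ ≤ 2 ^ n * C₂ * w u := by
    have step1 : ∫ ξ in Set.Ioo u (2 * u), w ξ / ξ
        ≤ ∫ ξ in Set.Ioo u (2 * u), (2 * u) ^ n * g ξ := by
      refine integral_mono_of_nonneg ?_ (hgm.const_mul _) ?_
      · refine (ae_restrict_iff' measurableSet_Ioo).2 (Filter.Eventually.of_forall ?_)
        intro ξ hξ
        have hξ0 : 0 < ξ := lt_trans hu hξ.1
        have hξ1 : ξ < 1 := lt_of_lt_of_le hξ.2 hu2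
        exact div_nonneg (hpos ξ ⟨hξ0, hξ1⟩) (le_of_lt hξ0)
      · refine (ae_restrict_iff' measurableSet_Ioo).2 (Filter.Eventually.of_forall ?_)
        intro ξ hξ
        have hξ0 : 0 < ξ := lt_trans hu hξ.1
        have hξ1 : ξ < 1 := lt_of_lt_of_le hξ.2 hu2
        have hg0 : 0 ≤ g ξ := div_nonneg (hpos ξ ⟨hξ0, hξ1⟩) (le_of_lt (pow_pos hξ0 _))
        have key : w ξ / ξ = ξ ^ n * g ξ := by
          rw [hgf ξ]
          field_simp
        show w ξ / ξ ≤ (2 * u) ^ n * g ξ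
        rw [key]
        exact mul_le_mul_of_nonneg_right
          (pow_le_pow_left₀ (le_of_lt hξ0) (le_of_lt hξ.2) n) hg0
    have step2 : ∫ ξ in Set.Ioo u (2 * u), (2 * u) ^ n * g ξ
        = (2 * u) ^ n * ∫ ξ in Set.Ioo u (2 * u), g ξ := integral_const_mul _ _
    have step3 : ∫ ξ in Set.Ioo u (2 * u), g ξ ≤ ∫ ξ in Set.Ioo u (1:ℝ), g ξ := by
      refine setIntegral_mono_set hg1 ?_ ?_
      · exact (ae_restrict_iff' measurableSet_Ioo).2
          (Filter.Eventually.of_forall hgpos)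
      · exact HasSubset.Subset.eventuallyLE (Set.Ioo_subset_Ioo le_rfl hu2)
    have step4 : ∫ ξ in Set.Ioo u (1:ℝ), g ξ ≤ C₂ * w u / u ^ n := hBn u hu hu1
    have hun : (0:ℝ) < u ^ n := pow_pos hu n
    calc ∫ ξ in Set.Ioo u (2 * u), w ξ / ξ
        ≤ (2 * u) ^ n * ∫ ξ in Set.Ioo u (2 * u), g ξ := by rw [← step2]; exact step1
      _ ≤ (2 * u) ^ n * (C₂ * w u / u ^ n) :=
          mul_le_mul_of_nonneg_left (le_trans step3 step4) (le_of_lt (pow_pos h2u n))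
      _ = 2 ^ n * C₂ * w u := by
          rw [mul_pow]
          field_simp
  -- split the integral
  have hsplit : ∫ ξ in Set.Ioo (0:ℝ) (2 * u), w ξ / ξ
      = (∫ ξ in Set.Ioo (0:ℝ) u, w ξ / ξ) + ∫ ξ in Set.Ioo u (2 * u), w ξ / ξ := by
    rw [← integral_Ioc_eq_integral_Ioo, ← integral_Ioc_eq_integral_Ioo,
      ← integral_Ioc_eq_integral_Ioo,
      ← Set.Ioc_union_Ioc_eq_Ioc (le_of_lt hu) (by linarith : u ≤ 2 * u),
      setIntegral_union (Set.Ioc_disjoint_Ioc_of_le le_rfl) measurableSet_Ioc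
        ((integrableOn_Ioc_iff_integrableOn_Ioo (by finiteness)).2 hfu)
        ((integrableOn_Ioc_iff_integrableOn_Ioo (by finiteness)).2 hfm)]
  rw [hsplit]
  calc (∫ ξ in Set.Ioo (0:ℝ) u, w ξ / ξ) + ∫ ξ in Set.Ioo u (2 * u), w ξ / ξ
      ≤ C₁ * w u + 2 ^ n * C₂ * w u := add_le_add (hDini u hu hu1) hmid
    _ = (C₁ + 2 ^ n * C₂) * w u := by ring
    _ ≤ max (C₁ + 2 ^ n * C₂) 0 * w u :=
        mul_le_mul_of_nonneg_right (le_max_left _ _) hwu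
end

section
/- Let a ∈ ℝ, 0 < h, and z ∈ ℂ with |z| < 1 and |e^{ia} − z| > 2h. Then |(z − e^{i(a−h)})(z − e^{i(a+h)})(e^{ia} − z)| ≥ (3/4)·|e^{ia} − z|³ ≥ 6h³. -/
open Complex

theorem stmt_4 (a h : ℝ) (hh : 0 < h) (z : ℂ) (hz : ‖z‖ < 1)
    (hd : 2 * h < ‖(Complex.exp (a * Complex.I) - z)‖) :
    (3 / 4) * ‖(Complex.exp (a * Complex.I) - z)‖ ^ 3 ≤
      ‖((z - Complex.exp ((a - h) * Complex.I)) *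
        (z - Complex.exp ((a + h) * Complex.I)) *
        (Complex.exp (a * Complex.I) - z))‖ ∧
    6 * h ^ 3 ≤ (3 / 4) * ‖(Complex.exp (a * Complex.I) - z)‖ ^ 3 := by
  set e := Complex.exp (a * Complex.I) with he
  set d := ‖(e - z)‖ with hdd
  have habse : ‖e‖ = 1 := Complex.norm_exp_ofReal_mul_I a
  have hsum : Complex.exp (((a : ℂ) - (h : ℂ)) * Complex.I) +
      Complex.exp (((a : ℂ) + (h : ℂ)) * Complex.I) = 2 * e * Real.cos h := by
    rw [he, sub_mul, add_mul, sub_eq_add_neg, Complex.exp_add, Complex.exp_add,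
      Complex.ofReal_cos, Complex.cos]
    ring_nf
  have hprod : Complex.exp (((a : ℂ) - (h : ℂ)) * Complex.I) *
      Complex.exp (((a : ℂ) + (h : ℂ)) * Complex.I) = e ^ 2 := by
    rw [he, ← Complex.exp_add, sq, ← Complex.exp_add]
    ring_nf
  have key : (z - Complex.exp (((a : ℂ) - (h : ℂ)) * Complex.I)) *
      (z - Complex.exp (((a : ℂ) + (h : ℂ)) * Complex.I))
      = (e - z) ^ 2 + 2 * e * z * ((1 - Real.cos h : ℝ) : ℂ) := by
    push_cast
    rw [Complex.ofReal_cos] at hsum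
    linear_combination (-z) * hsum + hprod
  have hcos : 1 - Real.cos h ≤ h ^ 2 / 2 := by
    nlinarith [Real.one_sub_sq_div_two_le_cos (x := h)]
  have hcos0 : 0 ≤ 1 - Real.cos h := by
    nlinarith [Real.cos_le_one h]
  have habs2 : ‖(2 * e * z * ((1 - Real.cos h : ℝ) : ℂ))‖ ≤ h ^ 2 := by
    rw [norm_mul, norm_mul, norm_mul, habse, Complex.norm_real, Real.norm_eq_abs, Complex.norm_two,
      _root_.abs_of_nonneg hcos0]
    nlinarith [norm_nonneg z]
  have hlow : d ^ 2 - h ^ 2 ≤ ‖((z - Complex.exp (((a : ℂ) - (h : ℂ)) * Complex.I)) *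
      (z - Complex.exp (((a : ℂ) + (h : ℂ)) * Complex.I)))‖ := by
    rw [key]
    set A := (e - z) ^ 2
    set B := 2 * e * z * ((1 - Real.cos h : ℝ) : ℂ)
    have h1 : ‖A‖ ≤ ‖(A + B)‖ + ‖B‖ := by
      calc ‖A‖ = ‖((A + B) + (-B))‖ := by ring_nf
        _ ≤ ‖(A + B)‖ + ‖(-B)‖ := norm_add_le _ _
        _ = ‖(A + B)‖ + ‖B‖ := by rw [norm_neg]
    have h2 : ‖A‖ = d ^ 2 := by rw [norm_pow]
    linarith
  have hdpos : 0 < d := by nlinarith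
  have hh2 : h ^ 2 ≤ d ^ 2 / 4 := by nlinarith
  constructor
  · rw [norm_mul]
    have h3 : (3 / 4) * d ^ 2 ≤ ‖((z - Complex.exp (((a : ℂ) - (h : ℂ)) * Complex.I)) *
        (z - Complex.exp (((a : ℂ) + (h : ℂ)) * Complex.I)))‖ := by linarith
    calc (3 / 4) * d ^ 3 = ((3 / 4) * d ^ 2) * d := by ring
      _ ≤ ‖((z - Complex.exp (((a : ℂ) - (h : ℂ)) * Complex.I)) *
          (z - Complex.exp (((a : ℂ) + (h : ℂ)) * Complex.I)))‖ * d :=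
        mul_le_mul_of_nonneg_right h3 (le_of_lt hdpos)
  · nlinarith
end

section
/- Let a ∈ ℝ, 0 < h ≤ 1, and z ∈ ℂ with |z| < 1 and |e^{ia} − z| > 2h. Then |K₁(a,h,z)| ≤ (8/3)·h²/|e^{ia} − z|³ ≤ 1/(3h), where K₁(a,h,z) = (1/i)·[1/(z − e^{i(a−h)}) + 1/(z − e^{i(a+h)}) + 2/(e^{ia} − z)]. -/
open Complex

theorem stmt_5 (a h : ℝ) (hh : 0 < h) (hh1 : h ≤ 1) (z : ℂ) (hz : ‖z‖ < 1)
    (hd : 2 * h < ‖Complex.exp (a * Complex.I) - z‖) :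
    ‖(1 / Complex.I) *
        (1 / (z - Complex.exp ((a - h) * Complex.I)) +
         1 / (z - Complex.exp ((a + h) * Complex.I)) +
         2 / (Complex.exp (a * Complex.I) - z))‖ ≤
      (8 / 3) * h ^ 2 / ‖Complex.exp (a * Complex.I) - z‖ ^ 3 ∧
    (8 / 3) * h ^ 2 / ‖Complex.exp (a * Complex.I) - z‖ ^ 3 ≤ 1 / (3 * h) := by
  set e := Complex.exp (a * Complex.I) with he
  set E := Complex.exp (h * Complex.I) with hE
  have hEne : E ≠ 0 := Complex.exp_ne_zero _
  have habs_e : ‖e‖ = 1 := Complex.norm_exp_ofReal_mul_I a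
  set d := ‖e - z‖ with hdd
  have hd0 : 0 < d := lt_trans (by positivity) hd
  -- 1 - cos h ≤ h^2/2
  have hcos1 : Real.cos h ≤ 1 := Real.cos_le_one h
  have hcosb : 1 - Real.cos h ≤ h ^ 2 / 2 := by
    have h1 : Real.cos h = 1 - 2 * Real.sin (h / 2) ^ 2 := by
      have := Real.cos_sq' (h / 2)
      have h2 : Real.cos (2 * (h / 2)) = 2 * Real.cos (h / 2) ^ 2 - 1 := Real.cos_two_mul _
      rw [show 2 * (h / 2) = h by ring] at h2
      nlinarith
    have h3 : |Real.sin (h / 2)| ≤ |h / 2| := Real.abs_sin_le_abs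
    have h4 : Real.sin (h / 2) ^ 2 ≤ (h / 2) ^ 2 := by
      nlinarith [_root_.sq_abs (Real.sin (h / 2)), _root_.sq_abs (h / 2),
        abs_nonneg (Real.sin (h / 2)), abs_nonneg (h / 2)]
    nlinarith
  -- exponent rewrites
  have hm : Complex.exp ((↑a - ↑h) * Complex.I) = e * E⁻¹ := by
    rw [he, hE, ← Complex.exp_neg, ← Complex.exp_add]; ring_nf
  have hp : Complex.exp ((↑a + ↑h) * Complex.I) = e * E := by
    rw [he, hE, ← Complex.exp_add]; ring_nf
  have hcosE : E + E⁻¹ = 2 * (Real.cos h : ℂ) := by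
    rw [hE, ← Complex.exp_neg, ← neg_mul, Complex.exp_mul_I, Complex.exp_mul_I]
    push_cast
    simp [Complex.cos_neg, Complex.sin_neg]
    ring
  -- product identity
  have hP : (z - e * E⁻¹) * (z - e * E) = (z - e) ^ 2 + e * z * (2 - 2 * (Real.cos h : ℂ)) := by
    rw [← hcosE]; field_simp; ring
  have habsz : ‖z‖ ≤ 1 := le_of_lt hz
  have hcnn : (0:ℝ) ≤ 2 - 2 * Real.cos h := by linarith
  have habsP : d ^ 2 - h ^ 2 ≤ ‖(z - e * E⁻¹) * (z - e * E)‖ := by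
    rw [hP]
    have h1 : ‖(z - e) ^ 2‖ = d ^ 2 := by
      rw [norm_pow, norm_sub_rev]
    have h2 : ‖e * z * (2 - 2 * (Real.cos h : ℂ))‖ ≤ h ^ 2 := by
      have hcc : ((2:ℂ) - 2 * (Real.cos h : ℂ)) = ((2 - 2 * Real.cos h : ℝ) : ℂ) := by
        push_cast; ring
      rw [norm_mul, norm_mul, habs_e, hcc, Complex.norm_real, Real.norm_eq_abs, _root_.abs_of_nonneg hcnn, one_mul]
      nlinarith
    have h3 := norm_sub_le_norm_add ((z - e) ^ 2) (e * z * (2 - 2 * (Real.cos h : ℂ)))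
    linarith
  have hhd : h < d / 2 := by linarith
  have hP34 : (3 / 4) * d ^ 2 ≤ ‖(z - e * E⁻¹) * (z - e * E)‖ := by
    nlinarith
  have hPne : (z - e * E⁻¹) * (z - e * E) ≠ 0 := by
    intro h0
    rw [h0, norm_zero] at hP34
    nlinarith
  have h1ne : z - e * E⁻¹ ≠ 0 := left_ne_zero_of_mul hPne
  have h2ne : z - e * E ≠ 0 := right_ne_zero_of_mul hPne
  have h3ne : e - z ≠ 0 := by
    intro h0; rw [hdd, h0, norm_zero] at hd0; exact lt_irrefl 0 hd0
  have hA : z - e * E⁻¹ = (E * z - e) * E⁻¹ := by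
    field_simp
  have h1ne' : E * z - e ≠ 0 := by
    intro h0; apply h1ne; rw [hA, h0, zero_mul]
  -- main identity
  have hS : 1 / (z - e * E⁻¹) + 1 / (z - e * E) + 2 / (e - z) =
      2 * e * (z + e) * (1 - (Real.cos h : ℂ)) / ((z - e * E⁻¹) * (z - e * E) * (e - z)) := by
    have hc : (Real.cos h : ℂ) = (E + E⁻¹) / 2 := by rw [hcosE]; ring
    rw [hc, hA]
    rw [div_add_div _ _ (mul_ne_zero h1ne' (inv_ne_zero hEne)) h2ne, div_add_div _ _ (mul_ne_zero (mul_ne_zero h1ne' (inv_ne_zero hEne)) h2ne) h3ne, div_eq_div_iff (mul_ne_zero (mul_ne_zero (mul_ne_zero h1ne' (inv_ne_zero hEne)) h2ne) h3ne) (mul_ne_zero (mul_ne_zero (mul_ne_zero h1ne' (inv_ne_zero hEne)) h2ne) h3ne)]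
    field_simp
    ring
  have key : ‖1 / (z - e * E⁻¹) + 1 / (z - e * E) + 2 / (e - z)‖ ≤
      (8 / 3) * h ^ 2 / d ^ 3 := by
    rw [hS, norm_div, norm_mul, norm_mul, norm_mul]
    have hnum : ‖(2:ℂ)‖ * ‖e‖ * ‖z + e‖ *
        ‖1 - (Real.cos h : ℂ)‖ ≤ 2 * h ^ 2 := by
      have ha2 : ‖z + e‖ ≤ 2 := by
        calc ‖z + e‖ ≤ ‖z‖ + ‖e‖ := norm_add_le _ _
          _ ≤ 2 := by rw [habs_e]; linarith
      have hac : ‖1 - (Real.cos h : ℂ)‖ = 1 - Real.cos h := by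
        rw [show (1:ℂ) - (Real.cos h : ℂ) = ((1 - Real.cos h : ℝ) : ℂ) by push_cast; ring,
          Complex.norm_real, Real.norm_eq_abs, _root_.abs_of_nonneg (by linarith : (0:ℝ) ≤ 1 - Real.cos h)]
      rw [habs_e, hac, Complex.norm_two]
      nlinarith [norm_nonneg (z + e)]
    have hden : (3 / 4) * d ^ 3 ≤ ‖(z - e * E⁻¹) * (z - e * E) * (e - z)‖ := by
      rw [norm_mul]
      calc (3 / 4) * d ^ 3 = ((3 / 4) * d ^ 2) * d := by ring
        _ ≤ _ := mul_le_mul hP34 le_rfl (le_of_lt hd0) (norm_nonneg _)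
    have hdenpos : 0 < ‖(z - e * E⁻¹) * (z - e * E) * (e - z)‖ := by
      rw [norm_mul]
      exact mul_pos (norm_pos_iff.mpr hPne) (norm_pos_iff.mpr h3ne)
    rw [div_le_div_iff₀ hdenpos (pow_pos hd0 3)]
    calc ‖(2:ℂ)‖ * ‖e‖ * ‖z + e‖ *
          ‖1 - (Real.cos h : ℂ)‖ * d ^ 3
        ≤ 2 * h ^ 2 * d ^ 3 := mul_le_mul_of_nonneg_right hnum (by positivity)
      _ = ((8 / 3) * h ^ 2) * ((3 / 4) * d ^ 3) := by ring
      _ ≤ ((8 / 3) * h ^ 2) * ‖(z - e * E⁻¹) * (z - e * E) * (e - z)‖ :=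
          mul_le_mul_of_nonneg_left hden (by positivity)
  constructor
  · rw [hm, hp, norm_mul]
    have hI : ‖1 / Complex.I‖ = 1 := by simp
    rw [hI, one_mul]
    exact key
  · have hcube : (2 * h) ^ 3 ≤ d ^ 3 :=
      pow_le_pow_left₀ (by positivity : (0:ℝ) ≤ 2 * h) (le_of_lt hd) 3
    rw [div_le_div_iff₀ (pow_pos hd0 3) (by positivity : (0:ℝ) < 3 * h)]
    linarith [hcube, show ((2*h)^3:ℝ) = 8 / 3 * h ^ 2 * (3 * h) from by ring]
end
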